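/- Let G₁ and G₂ be finite simple graphs with n₁, n₂ vertices and m₁, m₂ edges. Then F(G₁[G₂]) = n₂⁴F(G₁) + n₁F(G₂) + 6n₂²m₂M₁(G₁) + 6n₂m₁M₁(G₂), where G₁[G₂] is the lexicographic product (composition). -/

import Mathlib

open Finset

/-- Degree of a vertex: the number of its neighbors. -/
noncomputable def degN {V : Type*} (G : SimpleGraph V) (v : V) : ℕ :=
  Nat.card (G.neighborSet v)

/-- F-index: the sum of cubes of the vertex degrees. -/
noncomputable def Findex {V : Type*} [Fintype V] (G : SimpleGraph V) : ℕ :=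
  ∑ v, (degN G v) ^ 3

/-- First Zagreb index: the sum of squares of the vertex degrees. -/
noncomputable def zagrebM1 {V : Type*} [Fintype V] (G : SimpleGraph V) : ℕ :=
  ∑ v, (degN G v) ^ 2

/-- Number of edges of a graph. -/
noncomputable def numEdges {V : Type*} (G : SimpleGraph V) : ℕ :=
  Nat.card G.edgeSet

/-- Lexicographic product (composition) of two simple graphs. -/
def graphLex {V₁ V₂ : Type*} (G₁ : SimpleGraph V₁) (G₂ : SimpleGraph V₂) :
    SimpleGraph (V₁ × V₂) where
  Adj x y := G₁.Adj x.1 y.1 ∨ (x.1 = y.1 ∧ G₂.Adj x.2 y.2)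
  symm := by
    refine ⟨?_⟩
    rintro ⟨a, b⟩ ⟨c, d⟩ (h | ⟨h1, h2⟩)
    · exact Or.inl h.symm
    · exact Or.inr ⟨h1.symm, h2.symm⟩
  loopless := by
    refine ⟨?_⟩
    rintro ⟨a, b⟩ (h | ⟨_, h2⟩)
    · exact G₁.loopless.irrefl a h
    · exact G₂.loopless.irrefl b h2

lemma degN_eq_degree {V : Type*} [Fintype V] (G : SimpleGraph V) [DecidableRel G.Adj] (v : V) :
    degN G v = G.degree v := by
  rw [degN, Nat.card_eq_fintype_card, SimpleGraph.card_neighborSet_eq_degree]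

lemma sum_degN {V : Type*} [Fintype V] (G : SimpleGraph V) :
    ∑ v, degN G v = 2 * numEdges G := by
  classical
  simp only [degN_eq_degree]
  rw [SimpleGraph.sum_degrees_eq_twice_card_edges, numEdges, Nat.card_eq_fintype_card,
    SimpleGraph.edgeFinset_card]

lemma degN_lex {V₁ V₂ : Type*} [Fintype V₁] [Fintype V₂]
    (G₁ : SimpleGraph V₁) (G₂ : SimpleGraph V₂) (a : V₁) (b : V₂) :
    degN (graphLex G₁ G₂) (a, b) = Fintype.card V₂ * degN G₁ a + degN G₂ b := by
  classical
  rw [degN_eq_degree, degN_eq_degree, degN_eq_degree]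
  have h : (graphLex G₁ G₂).neighborFinset (a, b)
      = (G₁.neighborFinset a ×ˢ univ) ∪ ({a} ×ˢ G₂.neighborFinset b) := by
    ext ⟨c, d⟩
    simp only [SimpleGraph.mem_neighborFinset, Finset.mem_union, Finset.mem_product,
      Finset.mem_univ, Finset.mem_singleton, and_true]
    constructor
    · rintro (h | ⟨h1, h2⟩)
      · exact Or.inl h
      · exact Or.inr ⟨h1.symm, h2⟩
    · rintro (h | ⟨h1, h2⟩)
      · exact Or.inl h
      · exact Or.inr ⟨h1.symm, h2⟩
  have hd : Disjoint (G₁.neighborFinset a ×ˢ (univ : Finset V₂))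
      ({a} ×ˢ G₂.neighborFinset b) := by
    rw [Finset.disjoint_left]
    rintro ⟨c, d⟩ hc hc'
    simp only [Finset.mem_product, Finset.mem_singleton, SimpleGraph.mem_neighborFinset] at hc hc'
    exact G₁.loopless.irrefl a (hc'.1 ▸ hc.1)
  rw [SimpleGraph.degree, h, Finset.card_union_of_disjoint hd, Finset.card_product,
    Finset.card_product, Finset.card_univ, Finset.card_singleton, one_mul,
    SimpleGraph.degree, SimpleGraph.degree, mul_comm]

theorem Findex_lex {V₁ V₂ : Type*} [Fintype V₁] [Fintype V₂]
    (G₁ : SimpleGraph V₁) (G₂ : SimpleGraph V₂)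
    (n₁ n₂ m₁ m₂ : ℕ) (hn₁ : Fintype.card V₁ = n₁) (hn₂ : Fintype.card V₂ = n₂)
    (hm₁ : numEdges G₁ = m₁) (hm₂ : numEdges G₂ = m₂) :
    Findex (graphLex G₁ G₂) =
      n₂ ^ 4 * Findex G₁ + n₁ * Findex G₂ + 6 * n₂ ^ 2 * m₂ * zagrebM1 G₁
        + 6 * n₂ * m₁ * zagrebM1 G₂ := by
  have cube : ∀ x y : ℕ, (x + y) ^ 3 = x ^ 3 + 3 * x ^ 2 * y + 3 * x * (y ^ 2) + y ^ 3 := by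
    intros; ring
  have key : ∀ a : V₁, ∑ b : V₂, (degN (graphLex G₁ G₂) (a, b)) ^ 3
      = n₂ ^ 4 * (degN G₁ a) ^ 3 + 3 * n₂ ^ 2 * (degN G₁ a) ^ 2 * (2 * m₂)
        + 3 * n₂ * degN G₁ a * zagrebM1 G₂ + Findex G₂ := by
    intro a
    have : ∀ b : V₂, (degN (graphLex G₁ G₂) (a, b)) ^ 3
        = n₂ ^ 3 * (degN G₁ a) ^ 3 + 3 * (n₂ * degN G₁ a) ^ 2 * degN G₂ b
          + 3 * (n₂ * degN G₁ a) * (degN G₂ b ^ 2) + degN G₂ b ^ 3 := by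
      intro b
      rw [degN_lex, hn₂, cube]
      ring
    simp only [this, Finset.sum_add_distrib, Finset.sum_const, Finset.card_univ, hn₂,
      ← Finset.mul_sum, sum_degN, hm₂, zagrebM1, Findex]
    ring
  have hcomb : Findex (graphLex G₁ G₂) = ∑ a : V₁, ∑ b : V₂,
      (degN (graphLex G₁ G₂) (a, b)) ^ 3 := by
    rw [Findex, ← Finset.sum_product']
    rfl
  rw [hcomb]
  simp only [key, Finset.sum_add_distrib, Finset.sum_const, Finset.card_univ, hn₁,
    ← Finset.mul_sum, sum_degN, hm₁]
  have h3 : ∑ i : V₁, 3 * n₂ ^ 2 * degN G₁ i ^ 2 = 3 * n₂ ^ 2 * zagrebM1 G₁ := by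
    rw [← Finset.mul_sum]; rfl
  have h4 : ∑ i : V₁, 3 * n₂ * degN G₁ i = 3 * n₂ * (2 * m₁) := by
    rw [← Finset.mul_sum, sum_degN, hm₁]
  have h1 : ∑ i : V₁, degN G₁ i ^ 3 = Findex G₁ := rfl
  rw [← Finset.sum_mul, ← Finset.sum_mul, h3, h4, h1, smul_eq_mul]
  ring
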